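/- Let λ be a real number and m = 1, so that Hong's two-point scheme has ξ₁ = λ/2 + √(1 + (λ/2)²), ξ₂ = λ/2 − √(1 + (λ/2)²), w₁ = −ξ₂/(ξ₁ − ξ₂), w₂ = ξ₁/(ξ₁ − ξ₂). Let X be a real random variable with E[X] = μ, E[(X − μ)²] = σ² (σ > 0), E[((X − μ)/σ)³] = λ, and X³ integrable. Then for every real polynomial g of degree at most 3, the two-point quadrature is exact: w₁·g(μ + ξ₁σ) + w₂·g(μ + ξ₂σ) = E[g(X)]. -/

import Mathlib

open MeasureTheory Polynomial

/-- For a single random variable (`m = 1`), Hong's two-point quadrature is exact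
for every real polynomial `g` of degree at most 3:
`w₁·g(μ + ξ₁σ) + w₂·g(μ + ξ₂σ) = E[g(X)]`. -/
theorem tpe_single_variable_cubic_exact
    {Ω : Type*} [MeasurableSpace Ω] (P : Measure Ω) [IsProbabilityMeasure P]
    (X : Ω → ℝ) (μ σ lam : ℝ) (hσ : 0 < σ)
    (hint : Integrable X P)
    (hint2 : Integrable (fun ω => (X ω) ^ 2) P)
    (hint3 : Integrable (fun ω => (X ω) ^ 3) P)
    (hmean : ∫ ω, X ω ∂P = μ)
    (hvar : ∫ ω, (X ω - μ) ^ 2 ∂P = σ ^ 2)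
    (hskew : ∫ ω, ((X ω - μ) / σ) ^ 3 ∂P = lam)
    (ξ₁ ξ₂ w₁ w₂ : ℝ)
    (hξ₁ : ξ₁ = lam / 2 + Real.sqrt (1 + (lam / 2) ^ 2))
    (hξ₂ : ξ₂ = lam / 2 - Real.sqrt (1 + (lam / 2) ^ 2))
    (hw₁ : w₁ = -ξ₂ / (ξ₁ - ξ₂))
    (hw₂ : w₂ = ξ₁ / (ξ₁ - ξ₂)) :
    ∀ g : Polynomial ℝ, g.natDegree ≤ 3 →
      w₁ * g.eval (μ + ξ₁ * σ) + w₂ * g.eval (μ + ξ₂ * σ) =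
        ∫ ω, g.eval (X ω) ∂P := by
  intro g hg
  have hσ' : σ ≠ 0 := ne_of_gt hσ
  -- second raw moment
  have hI2 : ∫ ω, (X ω) ^ 2 ∂P = σ ^ 2 + μ ^ 2 := by
    have e : (fun ω => (X ω - μ) ^ 2) =
        fun ω => (X ω) ^ 2 - (2 * μ) * X ω + μ ^ 2 := by
      funext ω; ring
    rw [e] at hvar
    have ia : Integrable (fun ω => (X ω) ^ 2 - (2 * μ) * X ω) P :=
      hint2.sub (hint.const_mul _)
    rw [integral_add ia (integrable_const _),
        integral_sub hint2 (hint.const_mul _), integral_const_mul, hmean,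
        integral_const, probReal_univ] at hvar
    simp at hvar
    linarith
  -- third raw moment
  have hI3 : ∫ ω, (X ω) ^ 3 ∂P = lam * σ ^ 3 + 3 * μ * σ ^ 2 + μ ^ 3 := by
    have e : (fun ω => ((X ω - μ) / σ) ^ 3) =
        fun ω => ((X ω) ^ 3 - (3 * μ) * (X ω) ^ 2 + (3 * μ ^ 2) * X ω - μ ^ 3) / σ ^ 3 := by
      funext ω; field_simp; ring
    rw [e] at hskew
    have ia : Integrable (fun ω => (X ω) ^ 3 - (3 * μ) * (X ω) ^ 2) P :=
      hint3.sub (hint2.const_mul _)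
    have ib : Integrable (fun ω => (X ω) ^ 3 - (3 * μ) * (X ω) ^ 2 + (3 * μ ^ 2) * X ω) P :=
      ia.add (hint.const_mul _)
    rw [integral_div,
        integral_sub ib (integrable_const _),
        integral_add ia (hint.const_mul _),
        integral_sub hint3 (hint2.const_mul _), integral_const_mul, integral_const_mul,
        hmean, hI2, integral_const, probReal_univ] at hskew
    simp at hskew
    have h3 : σ ^ 3 ≠ 0 := pow_ne_zero _ hσ'
    field_simp at hskew
    nlinarith [hskew]
  -- moment identities for the two-point scheme
  have h0 : (0:ℝ) < 1 + (lam / 2) ^ 2 := by positivity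
  have hs : Real.sqrt (1 + (lam / 2) ^ 2) ^ 2 = 1 + (lam / 2) ^ 2 := Real.sq_sqrt h0.le
  have hspos : 0 < Real.sqrt (1 + (lam / 2) ^ 2) := Real.sqrt_pos.mpr h0
  have hdiff : ξ₁ - ξ₂ = 2 * Real.sqrt (1 + (lam / 2) ^ 2) := by rw [hξ₁, hξ₂]; ring
  have hdne : ξ₁ - ξ₂ ≠ 0 := by rw [hdiff]; positivity
  have hsum : ξ₁ + ξ₂ = lam := by rw [hξ₁, hξ₂]; ring
  have hprod : ξ₁ * ξ₂ = -1 := by rw [hξ₁, hξ₂]; nlinarith [hs]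
  have hm0 : w₁ + w₂ = 1 := by
    rw [hw₁, hw₂, ← add_div, div_eq_iff hdne]; ring
  have hm1 : w₁ * ξ₁ + w₂ * ξ₂ = 0 := by
    rw [hw₁, hw₂, div_mul_eq_mul_div, div_mul_eq_mul_div, ← add_div,
        _root_.div_eq_zero_iff]
    left; ring
  have hm2 : w₁ * ξ₁ ^ 2 + w₂ * ξ₂ ^ 2 = 1 := by
    rw [hw₁, hw₂, div_mul_eq_mul_div, div_mul_eq_mul_div, ← add_div,
        div_eq_iff hdne]
    linear_combination (-(ξ₁ - ξ₂)) * hprod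
  have hm3 : w₁ * ξ₁ ^ 3 + w₂ * ξ₂ ^ 3 = lam := by
    rw [hw₁, hw₂, div_mul_eq_mul_div, div_mul_eq_mul_div, ← add_div,
        div_eq_iff hdne]
    linear_combination (-(ξ₁ + ξ₂) * (ξ₁ - ξ₂)) * hprod + (ξ₁ - ξ₂) * hsum
  -- polynomial expansion
  have heval : ∀ x : ℝ, g.eval x =
      g.coeff 0 + g.coeff 1 * x + g.coeff 2 * x ^ 2 + g.coeff 3 * x ^ 3 := by
    intro x
    rw [Polynomial.eval_eq_sum_range' (lt_of_le_of_lt hg (by norm_num : (3:ℕ) < 4))]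
    simp [Finset.sum_range_succ]
    try ring
  have hR : ∫ ω, g.eval (X ω) ∂P =
      g.coeff 0 + g.coeff 1 * μ + g.coeff 2 * (σ ^ 2 + μ ^ 2) +
        g.coeff 3 * (lam * σ ^ 3 + 3 * μ * σ ^ 2 + μ ^ 3) := by
    simp_rw [heval]
    have i01 : Integrable (fun ω => g.coeff 0 + g.coeff 1 * X ω) P :=
      (integrable_const _).add (hint.const_mul _)
    have i012 : Integrable
        (fun ω => g.coeff 0 + g.coeff 1 * X ω + g.coeff 2 * (X ω) ^ 2) P :=
      i01.add (hint2.const_mul _)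
    rw [integral_add i012 (hint3.const_mul _),
        integral_add i01 (hint2.const_mul _),
        integral_add (integrable_const _) (hint.const_mul _),
        integral_const_mul, integral_const_mul, integral_const_mul,
        hmean, hI2, hI3, integral_const, probReal_univ]
    simp
  rw [hR, heval, heval]
  linear_combination
    (g.coeff 0 + g.coeff 1 * μ + g.coeff 2 * μ ^ 2 + g.coeff 3 * μ ^ 3) * hm0 +
    (g.coeff 1 * σ + 2 * g.coeff 2 * μ * σ + 3 * g.coeff 3 * μ ^ 2 * σ) * hm1 +
    (g.coeff 2 * σ ^ 2 + 3 * g.coeff 3 * μ * σ ^ 2) * hm2 +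
    (g.coeff 3 * σ ^ 3) * hm3
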